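/- Let ι be a countable type and p : ι → ℝ a probability mass function (p ≥ 0 with ∑_z p(z) = 1). Define the information content I(z) := −log p(z) for z with p(z) > 0, and assume the Shannon entropy H := ∑_z p(z) I(z) is finite. Suppose there exist ν > 0 and b ∈ (0, 2] such that for all real λ with |λ| ≤ 1/b, ∑_z p(z) exp( λ (I(z) − H) ) ≤ exp( ν² λ² ). Then ∑_z √(p(z)) is finite and 2 log( ∑_z √(p(z)) ) ≤ H + ν²/2; that is, the order-1/2 Rényi entropy H_{1/2} := 2 log ∑_z √(p(z)) satisfies H_{1/2} ≤ H + ν²/2. -/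

import Mathlib

open MeasureTheory

/-- If the information content `I(z) = −log p(z)` of a discrete distribution
with finite Shannon entropy `H` is sub-exponential about its mean, i.e.
`∑_z p(z) exp(λ(I(z) − H)) ≤ exp(ν²λ²)` for all `|λ| ≤ 1/b` with `0 < b ≤ 2`,
then `∑_z √(p(z))` is finite and the order-1/2 Rényi entropy satisfies
`H_{1/2} = 2 log ∑_z √(p(z)) ≤ H + ν²/2`. -/
theorem renyi_half_le_shannon_add_subexp
    {ι : Type*} [Countable ι] (p : ι → ℝ) (hp : ∀ z, 0 ≤ p z) (hp1 : ∑' z, p z = 1)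
    (H : ℝ) (hHsum : Summable (fun z => p z * (-Real.log (p z))))
    (hH : H = ∑' z, p z * (-Real.log (p z)))
    (ν b : ℝ) (hν : 0 < ν) (hb : 0 < b) (hb2 : b ≤ 2)
    (hmgf : ∀ lam : ℝ, |lam| ≤ 1 / b →
      ∑' z, ENNReal.ofReal (p z * Real.exp (lam * (-Real.log (p z) - H)))
        ≤ ENNReal.ofReal (Real.exp (ν ^ 2 * lam ^ 2))) :
    Summable (fun z => Real.sqrt (p z)) ∧
      2 * Real.log (∑' z, Real.sqrt (p z)) ≤ H + ν ^ 2 / 2 := by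
  have hhalf : |(1:ℝ)/2| ≤ 1 / b := by
    rw [abs_of_nonneg (by norm_num)]
    exact one_div_le_one_div_of_le hb hb2
  have key := hmgf (1/2) hhalf
  set c := Real.exp (-(H/2)) with hc
  have hcpos : 0 < c := Real.exp_pos _
  have hptw : ∀ z, p z * Real.exp ((1/2 : ℝ) * (-Real.log (p z) - H))
      = Real.sqrt (p z) * c := by
    intro z
    rcases eq_or_lt_of_le (hp z) with h | h
    · simp [← h]
    · have h1 : Real.exp ((1/2 : ℝ) * (-Real.log (p z) - H))
          = Real.exp (Real.log (p z) * (-(1/2) : ℝ)) * c := by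
        rw [← Real.exp_add]; ring_nf
      rw [h1, ← Real.rpow_def_of_pos h, ← mul_assoc]
      congr 1
      rw [Real.sqrt_eq_rpow]
      nth_rewrite 1 [← Real.rpow_one (p z)]
      rw [← Real.rpow_add h]
      norm_num
  simp only [hptw] at key
  have hfin : ∑' z, ENNReal.ofReal (Real.sqrt (p z) * c) ≠ ⊤ :=
    lt_of_le_of_lt key ENNReal.ofReal_lt_top |>.ne
  have hsum' : Summable (fun z => Real.sqrt (p z) * c) := by
    have := ENNReal.summable_toReal hfin
    simpa [ENNReal.toReal_ofReal (mul_nonneg (Real.sqrt_nonneg _) hcpos.le), ENNReal.toReal_ofReal hcpos.le] using this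
  have hsum : Summable (fun z => Real.sqrt (p z)) := by
    have := hsum'.mul_right c⁻¹
    simpa [mul_assoc, mul_inv_cancel₀ hcpos.ne'] using this
  refine ⟨hsum, ?_⟩
  set S := ∑' z, Real.sqrt (p z) with hS
  have hofReal : ENNReal.ofReal (S * c) = ∑' z, ENNReal.ofReal (Real.sqrt (p z) * c) := by
    rw [← tsum_mul_right]
    exact ENNReal.ofReal_tsum_of_nonneg
      (fun z => mul_nonneg (Real.sqrt_nonneg _) hcpos.le) hsum'
  have hle : S * c ≤ Real.exp (ν ^ 2 * (1/2) ^ 2) := by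
    rw [← ENNReal.ofReal_le_ofReal_iff (Real.exp_pos _).le, hofReal]
    exact key
  -- S > 0
  have hz : ∃ z, 0 < p z := by
    by_contra h
    push_neg at h
    have : ∀ z, p z = 0 := fun z => le_antisymm (h z) (hp z)
    simp [this] at hp1
  obtain ⟨z₀, hz₀⟩ := hz
  have hSpos : 0 < S := lt_of_lt_of_le (Real.sqrt_pos.2 hz₀)
    (hsum.le_tsum z₀ fun _ _ => Real.sqrt_nonneg _)
  have hSle : S ≤ Real.exp (H/2 + ν ^ 2 * (1/2) ^ 2) := by
    have := mul_le_mul_of_nonneg_right hle (Real.exp_pos (H/2)).le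
    rw [mul_assoc, hc, ← Real.exp_add, ← Real.exp_add] at this
    simpa [add_comm] using this
  have hlog := (Real.log_le_iff_le_exp hSpos).2 hSle
  nlinarith [hlog]
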